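/- Let α ∈ (0,1) and σ ∈ (1,2). There exists a constant C > 0 depending only on d, α, σ such that for every continuously differentiable u : ℝ^d → ℝ, Σ_{k=0}^∞ 2^{kσ} sup_{x_0∈ℝ^d} ‖u − P_{x_0}u‖_{L_∞(B_{2^{−k}}(x_0))} ≤ C Σ_{k=0}^∞ 2^{k(σ−α)} sup_{x_0∈ℝ^d} [u]_{Λ^α(B_{2^{−k}}(x_0))}, the inequality being understood in [0,∞]. -/

import Mathlib

open MeasureTheory Metric Filter Set
open scoped ENNReal Topology

noncomputable section

/-- Hölder seminorm `[u]_{γ;Ω}` (valued in `ℝ≥0∞`). -/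
def holderSemi {E F : Type*} [NormedAddCommGroup E] [NormedAddCommGroup F]
    (γ : ℝ) (Ω : Set E) (u : E → F) : ℝ≥0∞ :=
  ⨆ (x : E) (_ : x ∈ Ω) (y : E) (_ : y ∈ Ω) (_ : x ≠ y),
    ENNReal.ofReal (‖u x - u y‖ / ‖x - y‖ ^ γ)

/-- Zygmund seminorm `[u]_{Λ^α(Ω)}` (valued in `ℝ≥0∞`). -/
def zygmundSemi {E : Type*} [NormedAddCommGroup E] (α : ℝ) (Ω : Set E) (u : E → ℝ) : ℝ≥0∞ :=
  ⨆ (x : E) (h : E) (_ : h ≠ 0) (_ : x ∈ Ω) (_ : x + h ∈ Ω) (_ : x - h ∈ Ω),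
    ENNReal.ofReal (|u (x + h) + u (x - h) - 2 * u x| / ‖h‖ ^ α)

/-- The `L_∞` norm of `u` on `Ω` (valued in `ℝ≥0∞`). -/
def eSupNorm {E : Type*} (Ω : Set E) (u : E → ℝ) : ℝ≥0∞ :=
  ⨆ (x : E) (_ : x ∈ Ω), ENNReal.ofReal |u x|

/-- A Dini function: nonnegative, nondecreasing on `(0,∞)`, with `∫_0^1 ω(r)/r dr < ∞`. -/
def IsDini (ω : ℝ → ℝ) : Prop :=
  (∀ r, 0 < r → 0 ≤ ω r) ∧ MonotoneOn ω (Set.Ioi (0:ℝ)) ∧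
    IntegrableOn (fun r => ω r / r) (Set.Ioc (0:ℝ) 1)

/-- Pointwise second-difference bound by the Zygmund seminorm. -/
lemma zygmund_point_bound {E : Type*} [NormedAddCommGroup E] {α : ℝ} {Ω : Set E} {u : E → ℝ}
    {x h : E} (hh : h ≠ 0) (hx : x ∈ Ω) (hxp : x + h ∈ Ω) (hxm : x - h ∈ Ω) :
    ENNReal.ofReal |u (x + h) + u (x - h) - 2 * u x| ≤
      zygmundSemi α Ω u * ENNReal.ofReal (‖h‖ ^ α) := by
  have hpow : (0:ℝ) < ‖h‖ ^ α := Real.rpow_pos_of_pos (norm_pos_iff.mpr hh) α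
  have h1 : |u (x + h) + u (x - h) - 2 * u x| =
      |u (x + h) + u (x - h) - 2 * u x| / ‖h‖ ^ α * ‖h‖ ^ α := by
    field_simp
  rw [h1, ENNReal.ofReal_mul (by positivity)]
  refine mul_le_mul_left ?_ _
  simp only [zygmundSemi]
  exact le_iSup_of_le x <| le_iSup_of_le h <| le_iSup_of_le hh <| le_iSup_of_le hx <|
    le_iSup_of_le hxp <| le_iSup_of_le hxm le_rfl

/-- Telescoping bound. -/
lemma abs_head_le_telescope (f : ℕ → ℝ) (N : ℕ) :
    |f 0| ≤ (∑ j ∈ Finset.range N, |f j - f (j+1)|) + |f N| := by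
  induction N with
  | zero => simp
  | succ n ih =>
      rw [Finset.sum_range_succ]
      have h2 : |f n| ≤ |f n - f (n+1)| + |f (n+1)| := by
        have := abs_add_le (f n - f (n+1)) (f (n+1))
        simpa using this
      calc |f 0| ≤ (∑ j ∈ Finset.range n, |f j - f (j+1)|) + |f n| := ih
        _ ≤ (∑ j ∈ Finset.range n, |f j - f (j+1)|) + (|f n - f (n+1)| + |f (n+1)|) := by
            gcongr
        _ = (∑ j ∈ Finset.range n, |f j - f (j+1)|) + |f n - f (n+1)| + |f (n+1)| := by ring

/-- Lemma 2.4, second part: the `L_∞` Taylor-remainder series is controlled by the series of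
Zygmund seminorms. -/
theorem taylor_sup_series_le_zygmund_series
    (d : ℕ) (hd : 1 ≤ d) (α σ : ℝ) (hα : 0 < α) (hα1 : α < 1)
    (hσ1 : 1 < σ) (hσ2 : σ < 2) :
    ∃ C : ℝ, 0 < C ∧
      ∀ u : EuclideanSpace ℝ (Fin d) → ℝ, ContDiff ℝ 1 u →
        (∑' k : ℕ, ENNReal.ofReal ((2:ℝ) ^ ((k:ℝ) * σ)) *
            ⨆ x0 : EuclideanSpace ℝ (Fin d),
              eSupNorm (ball x0 ((2:ℝ) ^ (-(k:ℝ))))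
                (fun x => u x - (u x0 + (inner ℝ (gradient u x0) (x - x0) : ℝ)))) ≤
          ENNReal.ofReal C *
            ∑' k : ℕ, ENNReal.ofReal ((2:ℝ) ^ ((k:ℝ) * (σ - α))) *
              ⨆ x0 : EuclideanSpace ℝ (Fin d),
                zygmundSemi α (ball x0 ((2:ℝ) ^ (-(k:ℝ)))) u := by
  have two_pos' : (0:ℝ) < 2 := by norm_num
  set q : ℝ := (2:ℝ) ^ (1 - σ) with hqdef
  have hq0 : 0 < q := Real.rpow_pos_of_pos two_pos' _
  have hq1 : q < 1 := Real.rpow_lt_one_of_one_lt_of_neg one_lt_two (by linarith)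
  have hq1' : (0:ℝ) < 1 - q := by linarith
  refine ⟨(2:ℝ) ^ (-α) * (1 - q)⁻¹, by positivity, ?_⟩
  intro u hu
  set s : ℕ → ℝ := fun m => (2:ℝ) ^ (-(m:ℝ)) with hs
  have hs0 : ∀ m, 0 < s m := fun m => Real.rpow_pos_of_pos two_pos' _
  set B : ℕ → ℝ≥0∞ := fun m =>
    ⨆ x1 : EuclideanSpace ℝ (Fin d), zygmundSemi α (ball x1 (s m)) u with hB
  set D : ℕ → ℕ → ℝ≥0∞ := fun k j =>
    ENNReal.ofReal ((s (k+j) / 2) ^ α * (s j)⁻¹) * B (k+j) with hD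
  -- basic facts about s
  have hs_succ : ∀ j, s (j+1) = s j / 2 := by
    intro j
    simp only [hs]
    rw [show -(((j:ℕ)+1:ℕ):ℝ) = (-(j:ℝ)) + (-1) by push_cast; ring,
      Real.rpow_add two_pos', Real.rpow_neg_one]
    ring
  have hs_mul : ∀ j k, s j * s k = s (k+j) := by
    intro j k
    simp only [hs]
    rw [← Real.rpow_add two_pos']
    congr 1
    push_cast; ring
  have hs_zero : s 0 = 1 := by simp [hs]
  -- the pointwise key estimate
  have key : ∀ (k : ℕ) (x0 x : EuclideanSpace ℝ (Fin d)), x ∈ ball x0 (s k) →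
      ENNReal.ofReal |u x - (u x0 + (inner ℝ (gradient u x0) (x - x0) : ℝ))| ≤ ∑' j, D k j := by
    intro k x0 x hx
    set h : EuclideanSpace ℝ (Fin d) := x - x0 with hhdef
    by_cases h0 : h = 0
    · have hx0 : x = x0 := by rwa [hhdef, sub_eq_zero] at h0
      subst hx0
      have hz : (inner ℝ (gradient u x) (x - x) : ℝ) = 0 := by rw [sub_self, inner_zero_right]
      rw [hz]
      simp
    · set L : ℝ := (inner ℝ (gradient u x0) h : ℝ) with hL
      set e : ℕ → ℝ := fun j => u (x0 + s j • h) - u x0 - s j * L with he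
      set f : ℕ → ℝ := fun j => e j / s j with hf
      have hnorm : ‖h‖ < s k := by
        rw [hhdef, ← dist_eq_norm]
        exact mem_ball.mp hx
      have hxx : x0 + (x - x0) = x := by abel
      have hhe0 : u x - (u x0 + L) = e 0 := by
        simp only [he, hs_zero, one_smul, one_mul, hhdef, hxx]
        ring
      -- the increments
      have hdelta : ∀ j, ENNReal.ofReal |f j - f (j+1)| ≤ D k j := by
        intro j
        have hsj := (hs0 j).ne'
        set c : EuclideanSpace ℝ (Fin d) := x0 + (s j / 2) • h with hc
        set h' : EuclideanSpace ℝ (Fin d) := (s j / 2) • h with hh'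
        have hcp : c + h' = x0 + s j • h := by
          rw [hc, hh', add_assoc, ← add_smul]
          norm_num
        have hcm : c - h' = x0 := by rw [hc, hh']; abel
        have hfd : f j - f (j+1) = (u (c + h') + u (c - h') - 2 * u c) / s j := by
          rw [hcp, hcm]
          simp only [hf, he, hs_succ j, hc, hh']
          field_simp
          try ring

        have hh'0 : h' ≠ 0 := smul_ne_zero (by positivity) h0
        have hh'norm : ‖h'‖ < s (k+j) / 2 := by
          rw [hh', norm_smul, Real.norm_eq_abs, abs_of_pos (by positivity)]
          calc s j / 2 * ‖h‖ < s j / 2 * s k := by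
                have := norm_pos_iff.mpr h0
                gcongr
            _ = s (k+j) / 2 := by rw [div_mul_eq_mul_div, hs_mul]
        have hballc : c ∈ ball c (s (k+j)) := mem_ball_self (hs0 _)
        have hrad : ‖h'‖ < s (k+j) := hh'norm.trans (by have := hs0 (k+j); linarith)
        have hballp : c + h' ∈ ball c (s (k+j)) := by
          rw [mem_ball, dist_eq_norm, add_sub_cancel_left]; exact hrad
        have hballm : c - h' ∈ ball c (s (k+j)) := by
          rw [mem_ball, dist_eq_norm, sub_sub_cancel_left, norm_neg]; exact hrad
        have hz := zygmund_point_bound (α := α) (u := u) hh'0 hballc hballp hballm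
        have hzB : zygmundSemi α (ball c (s (k+j))) u ≤ B (k+j) := le_iSup_of_le c le_rfl
        calc ENNReal.ofReal |f j - f (j+1)|
            = ENNReal.ofReal (|u (c + h') + u (c - h') - 2 * u c| * (s j)⁻¹) := by
              rw [hfd, abs_div, abs_of_pos (hs0 j), div_eq_mul_inv]
          _ = ENNReal.ofReal |u (c + h') + u (c - h') - 2 * u c| *
                ENNReal.ofReal ((s j)⁻¹) := by
              rw [ENNReal.ofReal_mul (abs_nonneg _)]
          _ ≤ (B (k+j) * ENNReal.ofReal ((s (k+j) / 2) ^ α)) * ENNReal.ofReal ((s j)⁻¹) := by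
              refine mul_le_mul_left (hz.trans ?_) _
              refine mul_le_mul' hzB (ENNReal.ofReal_le_ofReal ?_)
              exact Real.rpow_le_rpow (norm_nonneg _) hh'norm.le hα.le
          _ = D k j := by
              simp only [hD]
              rw [ENNReal.ofReal_mul (Real.rpow_nonneg (div_nonneg (hs0 _).le (by norm_num)) α)]
              ring
      -- convergence of f to 0
      have hdiffu : DifferentiableAt ℝ u x0 := (hu.differentiable one_ne_zero) x0
      have hLf : L = fderiv ℝ u x0 h := by
        rw [hL, gradient]
        exact InnerProductSpace.toDual_symm_apply
      have hline : HasDerivAt (fun t : ℝ => u (x0 + t • h)) L 0 := by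
        have h1 : HasDerivAt (fun t : ℝ => x0 + t • h) h 0 := by
          simpa using ((hasDerivAt_id (0:ℝ)).smul_const h).const_add x0
        have hpt : x0 + (0:ℝ) • h = x0 := by simp
        have h2 : HasFDerivAt u (fderiv ℝ u x0) (x0 + (0:ℝ) • h) := by
          rw [hpt]; exact hdiffu.hasFDerivAt
        have h3 := h2.comp_hasDerivAt (0:ℝ) h1
        rw [hLf]
        exact h3
      have hslope := hasDerivAt_iff_tendsto_slope.mp hline
      have hstend : Tendsto s atTop (𝓝 (0:ℝ)) := by
        have hseq : s = fun N : ℕ => ((2:ℝ)⁻¹) ^ N := by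
          funext N
          simp only [hs]
          rw [Real.rpow_neg (by norm_num), Real.rpow_natCast, inv_pow]
        rw [hseq]
        exact tendsto_pow_atTop_nhds_zero_of_lt_one (by norm_num) (by norm_num)
      have hsne : Tendsto s atTop (𝓝[≠] (0:ℝ)) :=
        tendsto_nhdsWithin_of_tendsto_nhds_of_eventually_within _ hstend
          (Eventually.of_forall fun N => (hs0 N).ne')
      have hfN : ∀ N, f N = slope (fun t : ℝ => u (x0 + t • h)) 0 (s N) - L := by
        intro N
        rw [slope_def_field]
        simp only [hf, he, zero_smul, add_zero, sub_zero]
        rw [sub_div, mul_div_cancel_left₀ _ (hs0 N).ne']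
      have hflim : Tendsto f atTop (𝓝 0) := by
        have h3 : Tendsto (fun N => slope (fun t : ℝ => u (x0 + t • h)) 0 (s N) - L)
            atTop (𝓝 0) := by
          simpa using (hslope.comp hsne).sub_const L
        exact h3.congr fun N => (hfN N).symm
      have habslim : Tendsto (fun N => ENNReal.ofReal |f N|) atTop (𝓝 0) := by
        have : Tendsto (fun N => |f N|) atTop (𝓝 (0:ℝ)) := by
          simpa using hflim.abs
        simpa using ENNReal.tendsto_ofReal this
      -- put it together
      have hf0 : e 0 = f 0 := by simp [hf, hs_zero]
      have hN : ∀ N, ENNReal.ofReal |u x - (u x0 + L)| ≤ (∑' j, D k j) + ENNReal.ofReal |f N| := by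
        intro N
        rw [hhe0, hf0]
        calc ENNReal.ofReal |f 0|
            ≤ ENNReal.ofReal ((∑ j ∈ Finset.range N, |f j - f (j+1)|) + |f N|) :=
              ENNReal.ofReal_le_ofReal (abs_head_le_telescope f N)
          _ ≤ ENNReal.ofReal (∑ j ∈ Finset.range N, |f j - f (j+1)|) + ENNReal.ofReal |f N| :=
              ENNReal.ofReal_add_le
          _ = (∑ j ∈ Finset.range N, ENNReal.ofReal |f j - f (j+1)|) + ENNReal.ofReal |f N| := by
              rw [ENNReal.ofReal_sum_of_nonneg fun j _ => abs_nonneg _]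
          _ ≤ (∑ j ∈ Finset.range N, D k j) + ENNReal.ofReal |f N| := by
              gcongr with j hj
              exact hdelta j
          _ ≤ (∑' j, D k j) + ENNReal.ofReal |f N| := by
              gcongr
              exact ENNReal.sum_le_tsum _
      have htend : Tendsto (fun N => (∑' j, D k j) + ENNReal.ofReal |f N|) atTop
          (𝓝 ((∑' j, D k j) + 0)) := Tendsto.const_add _ habslim
      have := ge_of_tendsto htend (Eventually.of_forall hN)
      simpa using this
  -- the sup over x0 bound
  have hA : ∀ k : ℕ, (⨆ x0 : EuclideanSpace ℝ (Fin d),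
      eSupNorm (ball x0 (s k))
        (fun x => u x - (u x0 + (inner ℝ (gradient u x0) (x - x0) : ℝ)))) ≤ ∑' j, D k j := by
    intro k
    refine iSup_le fun x0 => ?_
    simp only [eSupNorm]
    exact iSup_le fun x => iSup_le fun hx => key k x0 x hx
  -- exponent computation
  set G : ℕ → ℝ≥0∞ := fun m => ENNReal.ofReal ((2:ℝ) ^ ((m:ℝ) * (σ - α))) * B m with hG
  have hterm : ∀ k j : ℕ, ENNReal.ofReal ((2:ℝ) ^ ((k:ℝ) * σ)) * D k j
      = ENNReal.ofReal ((2:ℝ) ^ (-α) * q ^ j) * G (k+j) := by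
    intro k j
    have hreal : (2:ℝ) ^ ((k:ℝ) * σ) * ((s (k+j) / 2) ^ α * (s j)⁻¹)
        = ((2:ℝ) ^ (-α) * q ^ j) * (2:ℝ) ^ ((((k+j):ℕ):ℝ) * (σ - α)) := by
      have e1 : s (k+j) / 2 = (2:ℝ) ^ (-(((k+j):ℕ):ℝ) - 1) := by
        simp only [hs]
        rw [Real.rpow_sub two_pos', Real.rpow_one]
      have e2 : ((s (k+j) / 2)) ^ α = (2:ℝ) ^ ((-(((k+j):ℕ):ℝ) - 1) * α) := by
        rw [e1, ← Real.rpow_mul (by norm_num : (0:ℝ) ≤ 2)]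
      have e3 : (s j)⁻¹ = (2:ℝ) ^ ((j:ℝ)) := by
        simp only [hs]
        rw [← Real.rpow_neg (by norm_num : (0:ℝ) ≤ 2), neg_neg]
      have e4 : q ^ j = (2:ℝ) ^ ((j:ℝ) * (1 - σ)) := by
        rw [hqdef, ← Real.rpow_natCast ((2:ℝ) ^ (1-σ)) j, ← Real.rpow_mul (by norm_num)]
        congr 1; ring
      rw [e2, e3, e4, ← Real.rpow_add two_pos', ← Real.rpow_add two_pos',
        ← Real.rpow_add two_pos', ← Real.rpow_add two_pos']
      congr 1
      push_cast
      ring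
    rw [hD, hG, ← mul_assoc, ← mul_assoc,
      ← ENNReal.ofReal_mul (by positivity),
      ← ENNReal.ofReal_mul (by positivity), hreal]
  -- geometric series
  have hgeom : (∑' j : ℕ, ENNReal.ofReal ((2:ℝ) ^ (-α) * q ^ j))
      = ENNReal.ofReal ((2:ℝ) ^ (-α) * (1 - q)⁻¹) := by
    rw [← ENNReal.ofReal_tsum_of_nonneg (fun j => by positivity)
      (((summable_geometric_of_lt_one hq0.le hq1)).mul_left _)]
    congr 1
    rw [tsum_mul_left, tsum_geometric_of_lt_one hq0.le hq1]
  -- main chain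
  calc (∑' k : ℕ, ENNReal.ofReal ((2:ℝ) ^ ((k:ℝ) * σ)) *
        ⨆ x0 : EuclideanSpace ℝ (Fin d),
          eSupNorm (ball x0 ((2:ℝ) ^ (-(k:ℝ))))
            (fun x => u x - (u x0 + (inner ℝ (gradient u x0) (x - x0) : ℝ))))
      ≤ ∑' k : ℕ, ENNReal.ofReal ((2:ℝ) ^ ((k:ℝ) * σ)) * ∑' j, D k j := by
        refine ENNReal.tsum_le_tsum fun k => mul_le_mul_right (hA k) _
    _ = ∑' k : ℕ, ∑' j : ℕ, ENNReal.ofReal ((2:ℝ) ^ ((k:ℝ) * σ)) * D k j := by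
        refine tsum_congr fun k => (ENNReal.tsum_mul_left).symm
    _ = ∑' k : ℕ, ∑' j : ℕ, ENNReal.ofReal ((2:ℝ) ^ (-α) * q ^ j) * G (k+j) :=
        tsum_congr fun k => tsum_congr fun j => hterm k j
    _ = ∑' j : ℕ, ∑' k : ℕ, ENNReal.ofReal ((2:ℝ) ^ (-α) * q ^ j) * G (k+j) :=
        ENNReal.tsum_comm
    _ = ∑' j : ℕ, ENNReal.ofReal ((2:ℝ) ^ (-α) * q ^ j) * ∑' k : ℕ, G (k+j) :=
        tsum_congr fun j => ENNReal.tsum_mul_left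
    _ ≤ ∑' j : ℕ, ENNReal.ofReal ((2:ℝ) ^ (-α) * q ^ j) * ∑' m : ℕ, G m := by
        refine ENNReal.tsum_le_tsum fun j => mul_le_mul_right ?_ _
        exact ENNReal.tsum_comp_le_tsum_of_injective (add_left_injective j) G
    _ = (∑' j : ℕ, ENNReal.ofReal ((2:ℝ) ^ (-α) * q ^ j)) * ∑' m : ℕ, G m :=
        ENNReal.tsum_mul_right
    _ = ENNReal.ofReal ((2:ℝ) ^ (-α) * (1 - q)⁻¹) * ∑' m : ℕ, G m := by rw [hgeom]
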